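/- Let x̄ ∈ Ω = g⁻¹(K) be a local minimizer of a differentiable f over Ω, where g : ℝⁿ → E is differentiable and K ⊆ E is a closed convex cone. If T_Ω(x̄)° = L_Ω(x̄)° and H(x̄) = Dg(x̄)ᵀ[N_K(g(x̄))] is closed, then there exists λ̄ ∈ K° with ∇f(x̄) + Dg(x̄)ᵀ λ̄ = 0 and ⟨g(x̄), λ̄⟩ = 0 (KKT conditions). -/

import Mathlib

open scoped RealInnerProductSpace

/-- Polar of a set in a real inner product space. -/
def polarSet {E : Type*} [NormedAddCommGroup E] [InnerProductSpace ℝ E] (S : Set E) : Set E :=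
  {z | ∀ y ∈ S, ⟪z, y⟫ ≤ 0}

/-- Tangent cone to a convex set `K` at `y`: closure of the cone of feasible directions. -/
def tangentConeCvx {E : Type*} [NormedAddCommGroup E] [InnerProductSpace ℝ E]
    (K : Set E) (y : E) : Set E :=
  closure {w | ∃ c : ℝ, 0 ≤ c ∧ ∃ k ∈ K, w = c • (k - y)}

/-- The Bouligand tangent cone to `S` at `z`. -/
def bouligandCone {E : Type*} [NormedAddCommGroup E] [NormedSpace ℝ E]
    (S : Set E) (z : E) : Set E :=
  {y | ∃ t : ℕ → ℝ, ∃ w : ℕ → E, (∀ k, 0 < t k) ∧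
    Filter.Tendsto t Filter.atTop (nhds 0) ∧
    Filter.Tendsto w Filter.atTop (nhds y) ∧
    ∀ k, z + t k • w k ∈ S}

section Aux

variable {E : Type*} [NormedAddCommGroup E] [InnerProductSpace ℝ E]

/-- Bipolar theorem for closed convex cones. -/
lemma polarSet_polarSet_eq [CompleteSpace E] (S : Set E) (h0 : (0 : E) ∈ S)
    (hcl : IsClosed S) (hconv : Convex ℝ S)
    (hcone : ∀ x ∈ S, ∀ c : ℝ, 0 ≤ c → c • x ∈ S) :
    polarSet (polarSet S) = S := by
  let C : ConvexCone ℝ E :=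
    { carrier := S
      smul_mem' := fun c hc x hx => hcone x hx c hc.le
      add_mem' := by
        intro x hx y hy
        have hmid : (1/2 : ℝ) • x + (1/2 : ℝ) • y ∈ S :=
          hconv hx hy (by norm_num) (by norm_num) (by norm_num)
        have h := hcone _ hmid 2 (by norm_num)
        have h2 : (2 : ℝ) • ((1/2 : ℝ) • x + (1/2 : ℝ) • y) = x + y := by
          rw [smul_add, smul_smul, smul_smul]; norm_num
        rwa [h2] at h }
  ext w
  constructor
  · intro hw
    by_contra hwS
    obtain ⟨φ, u, hφS, hu⟩ := geometric_hahn_banach_closed_point hconv hcl hwS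
    have hu0 : 0 < u := by simpa using hφS 0 h0
    have hneg : ∀ a ∈ S, φ a ≤ 0 := by
      intro a ha
      by_contra hpos
      push_neg at hpos
      have h1 := hφS _ (hcone a ha (u / φ a) (by positivity))
      rw [map_smul, smul_eq_mul, div_mul_cancel₀ _ hpos.ne'] at h1
      exact lt_irrefl _ h1
    have hz : (InnerProductSpace.toDual ℝ E).symm φ ∈ polarSet S := by
      intro a ha
      rw [InnerProductSpace.toDual_symm_apply]
      exact hneg a ha
    have h2 := hw _ hz
    rw [real_inner_comm, InnerProductSpace.toDual_symm_apply] at h2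
    linarith
  · intro hw z hz
    rw [real_inner_comm]
    exact hz w hw

lemma preCone_convex {K : Set E} (hconv : Convex ℝ K) {y : E} (hy : y ∈ K) :
    Convex ℝ {w | ∃ c : ℝ, 0 ≤ c ∧ ∃ k ∈ K, w = c • (k - y)} := by
  rintro w1 ⟨c1, hc1, k1, hk1, rfl⟩ w2 ⟨c2, hc2, k2, hk2, rfl⟩ a b ha hb hab
  rcases eq_or_lt_of_le (by positivity : (0:ℝ) ≤ a * c1 + b * c2) with hc | hc
  · have h1 : a * c1 = 0 := by nlinarith [mul_nonneg ha hc1, mul_nonneg hb hc2]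
    have h2 : b * c2 = 0 := by nlinarith [mul_nonneg ha hc1, mul_nonneg hb hc2]
    refine ⟨0, le_refl 0, y, hy, ?_⟩
    rw [smul_smul, smul_smul, h1, h2]
    simp
  · set c : ℝ := a * c1 + b * c2 with hcdef
    have hcne : c ≠ 0 := ne_of_gt hc
    refine ⟨c, hc.le, (a * c1 / c) • k1 + (b * c2 / c) • k2,
      hconv hk1 hk2 (by positivity) (by positivity) (by field_simp; exact hcdef.symm), ?_⟩
    match_scalars <;> (try field_simp) <;> (try ring) <;> linarith [hcdef]

lemma localmin_bouligand {n : ℕ} (f : EuclideanSpace ℝ (Fin n) → ℝ)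
    (S : Set (EuclideanSpace ℝ (Fin n))) (x0 gradf : EuclideanSpace ℝ (Fin n))
    (hgrad : HasGradientAt f gradf x0) (hmin : IsLocalMinOn f S x0)
    {d : EuclideanSpace ℝ (Fin n)} (hd : d ∈ bouligandCone S x0) :
    0 ≤ ⟪gradf, d⟫ := by
  obtain ⟨t, w, ht, ht0, hw, hmem⟩ := hd
  have hF := hgrad.hasFDerivAt
  -- u k := x0 + t k • w k tends to x0
  have htw : Filter.Tendsto (fun k => t k • w k) Filter.atTop (nhds 0) := by
    have := ht0.smul hw
    simpa using this
  have hu : Filter.Tendsto (fun k => x0 + t k • w k) Filter.atTop (nhds x0) := by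
    have := Filter.Tendsto.const_add x0 htw
    simpa using this
  -- eventual local-min inequality
  have huS : Filter.Tendsto (fun k => x0 + t k • w k) Filter.atTop (nhdsWithin x0 S) :=
    tendsto_nhdsWithin_of_tendsto_nhds_of_eventually_within _ hu
      (Filter.Eventually.of_forall hmem)
  have hev : ∀ᶠ k in Filter.atTop, f x0 ≤ f (x0 + t k • w k) := huS.eventually hmin
  -- little-o analysis
  have h1 := hF.isLittleO.comp_tendsto hu
  simp only [Function.comp_def, add_sub_cancel_left] at h1
  have h2 : (fun k => t k • w k) =O[Filter.atTop] t := by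
    apply Asymptotics.IsBigO.of_bound (‖d‖ + 1)
    have hb : ∀ᶠ k in Filter.atTop, ‖w k‖ < ‖d‖ + 1 :=
      hw.norm.eventually_lt_const (by linarith)
    filter_upwards [hb] with k hk
    rw [norm_smul]
    calc ‖t k‖ * ‖w k‖ ≤ ‖t k‖ * (‖d‖ + 1) := by
          exact mul_le_mul_of_nonneg_left hk.le (norm_nonneg _)
      _ = (‖d‖ + 1) * ‖t k‖ := mul_comm _ _
  have h3 := h1.trans_isBigO h2
  have h4 := h3.tendsto_div_nhds_zero
  have hFd : Filter.Tendsto (fun k => ⟪gradf, w k⟫) Filter.atTop (nhds ⟪gradf, d⟫) :=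
    Filter.Tendsto.inner tendsto_const_nhds hw
  have h5 := h4.add hFd
  rw [zero_add] at h5
  have heq : (fun k =>
      (f (x0 + t k • w k) - f x0 - (InnerProductSpace.toDual ℝ _) gradf (t k • w k)) / t k
        + ⟪gradf, w k⟫) = fun k => (f (x0 + t k • w k) - f x0) / t k := by
    funext k
    have htk := (ht k).ne'
    rw [InnerProductSpace.toDual_apply_apply, real_inner_smul_right]
    field_simp
    ring
  rw [heq] at h5
  refine ge_of_tendsto h5 ?_
  filter_upwards [hev] with k hk
  exact div_nonneg (by linarith) (ht k).le

end Aux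

/-- Guignard's theorem: if `x̄` is a local minimizer of `f` over `Ω = g⁻¹(K)`,
`T_Ω(x̄)° = L_Ω(x̄)°`, and `H(x̄) = Dg(x̄)ᵀ[N_K(g(x̄))]` is closed, then the
KKT conditions hold at `x̄`. -/
theorem stmt4 {n : ℕ} {E : Type*} [NormedAddCommGroup E] [InnerProductSpace ℝ E]
    [FiniteDimensional ℝ E] (K : Set E) (hclosed : IsClosed K) (hconv : Convex ℝ K)
    (hcone : ∀ x ∈ K, ∀ c : ℝ, 0 ≤ c → c • x ∈ K)
    (f : EuclideanSpace ℝ (Fin n) → ℝ) (g : EuclideanSpace ℝ (Fin n) → E)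
    (x0 : EuclideanSpace ℝ (Fin n))
    (gradf : EuclideanSpace ℝ (Fin n)) (hgrad : HasGradientAt f gradf x0)
    (Dg : EuclideanSpace ℝ (Fin n) →L[ℝ] E) (hg : HasFDerivAt g Dg x0)
    (hfeas : x0 ∈ g ⁻¹' K)
    (hmin : IsLocalMinOn f (g ⁻¹' K) x0)
    (hpolar : polarSet (bouligandCone (g ⁻¹' K) x0) =
      polarSet {d | Dg d ∈ tangentConeCvx K (g x0)})
    (hH : IsClosed (⇑(ContinuousLinearMap.adjoint Dg) ''
      polarSet (tangentConeCvx K (g x0)))) :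
    ∃ lam ∈ polarSet K, gradf + ContinuousLinearMap.adjoint Dg lam = 0 ∧
      ⟪g x0, lam⟫ = 0 := by
  classical
  set y := g x0 with hy
  have hyK : y ∈ K := hfeas
  set P : Set E := {w | ∃ c : ℝ, 0 ≤ c ∧ ∃ k ∈ K, w = c • (k - y)} with hPdef
  set C : Set E := tangentConeCvx K y with hCdef
  have hCP : C = closure P := rfl
  have hP0 : (0 : E) ∈ P := ⟨0, le_refl 0, y, hyK, by simp⟩
  have hC0 : (0 : E) ∈ C := subset_closure hP0
  have hPconvex : Convex ℝ P := preCone_convex hconv hyK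
  have hPcone : ∀ x ∈ P, ∀ c : ℝ, 0 ≤ c → c • x ∈ P := by
    rintro x ⟨c', hc', k, hk, rfl⟩ c hc
    exact ⟨c * c', mul_nonneg hc hc', k, hk, by rw [smul_smul]⟩
  have hCclosed : IsClosed C := isClosed_closure
  have hCconvex : Convex ℝ C := hPconvex.closure
  have hCcone : ∀ x ∈ C, ∀ c : ℝ, 0 ≤ c → c • x ∈ C := by
    intro x hx c hc
    exact map_mem_closure (continuous_const_smul c) hx (fun z hz => hPcone z hz c hc)
  -- bipolar of C
  have hCbip : polarSet (polarSet C) = C :=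
    polarSet_polarSet_eq C hC0 hCclosed hCconvex hCcone
  set A := ContinuousLinearMap.adjoint Dg with hA
  set H : Set (EuclideanSpace ℝ (Fin n)) := ⇑A '' polarSet C with hHdef
  -- polarSet C is a convex cone containing 0
  have hpc0 : (0 : E) ∈ polarSet C := by intro z hz; simp
  have hpcconv : Convex ℝ (polarSet C) := by
    intro z1 hz1 z2 hz2 a b ha hb hab
    intro u hu
    have h1 := hz1 u hu
    have h2 := hz2 u hu
    rw [inner_add_left, real_inner_smul_left, real_inner_smul_left]
    nlinarith [mul_le_mul_of_nonneg_left h1 ha, mul_le_mul_of_nonneg_left h2 hb]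
  have hpccone : ∀ x ∈ polarSet C, ∀ c : ℝ, 0 ≤ c → c • x ∈ polarSet C := by
    intro x hx c hc u hu
    rw [real_inner_smul_left]
    exact mul_nonpos_of_nonneg_of_nonpos hc (hx u hu)
  -- H is a closed convex cone containing 0
  have hH0 : (0 : EuclideanSpace ℝ (Fin n)) ∈ H := ⟨0, hpc0, by simp⟩
  have hHconv : Convex ℝ H := hpcconv.linear_image A.toLinearMap
  have hHcone : ∀ x ∈ H, ∀ c : ℝ, 0 ≤ c → c • x ∈ H := by
    rintro x ⟨lam, hlam, rfl⟩ c hc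
    exact ⟨c • lam, hpccone lam hlam c hc, by rw [map_smul]⟩
  have hHbip : polarSet (polarSet H) = H :=
    polarSet_polarSet_eq H hH0 hH hHconv hHcone
  -- -gradf is in the polar of the Bouligand cone
  have hstep1 : -gradf ∈ polarSet (bouligandCone (g ⁻¹' K) x0) := by
    intro dd hdd
    have := localmin_bouligand f (g ⁻¹' K) x0 gradf hgrad hmin hdd
    rw [inner_neg_left]
    linarith
  rw [hpolar] at hstep1
  -- polar of L is contained in H
  have hLH : polarSet {d | Dg d ∈ C} ⊆ H := by
    intro z hz
    rw [← hHbip]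
    intro dd hdd
    -- dd ∈ polarSet H means Dg dd ∈ C by the bipolar theorem applied to C
    have hDgdd : Dg dd ∈ C := by
      rw [← hCbip]
      intro lam hlam
      have := hdd (A lam) ⟨lam, hlam, rfl⟩
      have hadj : ⟪(A lam : EuclideanSpace ℝ (Fin n)), dd⟫ = ⟪lam, Dg dd⟫ :=
        ContinuousLinearMap.adjoint_inner_left Dg dd lam
      rw [real_inner_comm] at this
      rw [real_inner_comm]
      rw [hadj] at this
      linarith
    exact hz dd hDgdd
  obtain ⟨lam, hlam, hAlam⟩ := hLH hstep1
  refine ⟨lam, ?_, by rw [hAlam]; abel, ?_⟩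
  · -- lam ∈ polarSet K
    intro k hk
    have hky : k - y ∈ P := ⟨1, zero_le_one, k, hk, by rw [one_smul]⟩
    have h1 := hlam (k - y) (subset_closure hky)
    have hyP : y ∈ P := ⟨1, zero_le_one, 2 • y, hcone y hyK 2 (by norm_num), by
      rw [one_smul]; rw [two_smul]; abel⟩
    have hyP' : -y ∈ P := ⟨1, zero_le_one, 0, by simpa using hcone y hyK 0 le_rfl, by
      rw [one_smul, zero_sub]⟩
    have h2 := hlam y (subset_closure hyP)
    rw [inner_sub_right] at h1
    linarith
  · -- complementarity
    have hyP : y ∈ P := ⟨1, zero_le_one, 2 • y, hcone y hyK 2 (by norm_num), by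
      rw [one_smul]; rw [two_smul]; abel⟩
    have hyP' : -y ∈ P := ⟨1, zero_le_one, 0, by simpa using hcone y hyK 0 le_rfl, by
      rw [one_smul, zero_sub]⟩
    have h2 := hlam y (subset_closure hyP)
    have h3 := hlam (-y) (subset_closure hyP')
    rw [inner_neg_right] at h3
    rw [real_inner_comm]
    linarith
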